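/- For each of the spinor representation matrices Γ ∈ {H₁, H₂, E_{+1,+1}, E_{+1,−1}, E_{+1,0}, E_{0,+1}} and their adjoints, the identity Γ̃ᵗ λ^{−r₁H₂} + λ^{r₂H₁} Γ = 0 holds, where Γ̃ = σΓσ⁻¹ with σ the 4×4 block-diagonal matrix with blocks [[0,−1],[1,0]], r = (r₁,r₂) the corresponding root (r = (0,0) for H_j), and λ^{±H_j} is the diagonal matrix exponential of the explicit 4×4 matrices H₁ = diag(1,−1,−1,1)/2, H₂ = diag(−1,1,−1,1)/2 with λ = e^{2πiθ}. -/
import Mathlib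


open Matrix

set_option maxHeartbeats 3200000 in
/-- For each spinor representation matrix
`Γ ∈ {H₁, H₂, E_{+1,+1}, E_{+1,−1}, E_{+1,0}, E_{0,+1}}` and their adjoints
(with roots `−r`), the identity `Γ̃ᵗ λ^{−r₁H₂} + λ^{r₂H₁} Γ = 0` holds, where
`Γ̃ = σΓσ⁻¹`, `r` is the corresponding root (`(0,0)` for the `H_j`), and
`λ^{cH_j}` is the diagonal matrix with entries `λ^{c·(H_j)_{aa}}`,
`λ = e^{2πiθ}`, `μ = e^{πiθ}`. -/
theorem stmt_8 (θ : ℝ) (μ : ℂ) (hμ : μ = Complex.exp (Real.pi * Complex.I * θ))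
    (lampow : ℝ → ℂ)
    (hlampow : ∀ x : ℝ, lampow x = Complex.exp (2 * Real.pi * Complex.I * θ * x))
    (H1 H2 Epp Epm Ep0 E0p σm : Matrix (Fin 4) (Fin 4) ℂ)
    (hH1 : H1 = (1/2 : ℂ) • Matrix.diagonal ![1, -1, -1, 1])
    (hH2 : H2 = (1/2 : ℂ) • Matrix.diagonal ![-1, 1, -1, 1])
    (hEpp : Epp = !![0,0,0,0; 0,0,0,0; 0,0,0,-1; 0,0,0,0])
    (hEpm : Epm = !![0,0,0,0; -μ,0,0,0; 0,0,0,0; 0,0,0,0])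
    (hEp0 : Ep0 = ((Real.sqrt 2)⁻¹ : ℂ) • !![0,0,0,0; 0,0,0,-1; μ,0,0,0; 0,0,0,0])
    (hE0p : E0p = ((Real.sqrt 2)⁻¹ : ℂ) • !![0,0,0,star μ; 0,0,0,0; 0,1,0,0; 0,0,0,0])
    (hσ : σm = !![0,-1,0,0; 1,0,0,0; 0,0,0,-1; 0,0,1,0])
    (L1 L2 : ℝ → Matrix (Fin 4) (Fin 4) ℂ)
    (hL1 : ∀ c : ℝ, L1 c = Matrix.diagonal
      ![lampow (c * (1/2)), lampow (-(c * (1/2))),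
        lampow (-(c * (1/2))), lampow (c * (1/2))])
    (hL2 : ∀ c : ℝ, L2 c = Matrix.diagonal
      ![lampow (-(c * (1/2))), lampow (c * (1/2)),
        lampow (-(c * (1/2))), lampow (c * (1/2))]) :
    ∀ P ∈ ([(H1, (0:ℝ), (0:ℝ)), (H2, 0, 0),
            (Epp, 1, 1), (Epm, 1, -1), (Ep0, 1, 0), (E0p, 0, 1),
            (H1ᴴ, 0, 0), (H2ᴴ, 0, 0),
            (Eppᴴ, -1, -1), (Epmᴴ, -1, 1), (Ep0ᴴ, -1, 0), (E0pᴴ, 0, -1)] :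
           List (Matrix (Fin 4) (Fin 4) ℂ × ℝ × ℝ)),
      (σm * P.1 * σm⁻¹)ᵀ * L2 (-P.2.1) + L1 P.2.2 * P.1 = 0 := by
  have hμ0 : μ ≠ 0 := by rw [hμ]; exact Complex.exp_ne_zero _
  have lh : lampow (1/2) = μ := by rw [hlampow, hμ]; congr 1; push_cast; ring
  have lnh : lampow (-(1/2)) = μ⁻¹ := by
    rw [hlampow, hμ, ← Complex.exp_neg]; congr 1; push_cast; ring
  have lh2 : lampow (2⁻¹) = μ := by rw [← lh]; norm_num
  have lnh2 : lampow (-2⁻¹) = μ⁻¹ := by rw [← lnh]; norm_num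
  have l0 : lampow 0 = 1 := by rw [hlampow]; norm_num
  have hstar : star μ = μ⁻¹ := by
    rw [hμ, Complex.star_def, ← Complex.exp_conj, ← Complex.exp_neg]
    congr 1; simp [Complex.ext_iff]
  have hconj : (starRingEnd ℂ) μ = μ⁻¹ := hstar
  have hσi : σm⁻¹ = -σm := by
    apply Matrix.inv_eq_right_inv
    subst hσ
    ext i j
    fin_cases i <;> fin_cases j <;>
      simp [Matrix.mul_apply, Fin.sum_univ_four, Matrix.one_apply,
        Matrix.vecHead, Matrix.vecTail]
  have d4 : ∀ a b c d : ℂ, Matrix.diagonal ![a,b,c,d]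
      = !![a,0,0,0; 0,b,0,0; 0,0,c,0; 0,0,0,d] := by
    intro a b c d; ext i j; fin_cases i <;> fin_cases j <;> rfl
  have ct4 : ∀ (a b c d e f g h i j k l m n o p : ℂ),
      (!![a,b,c,d; e,f,g,h; i,j,k,l; m,n,o,p])ᴴ =
      !![star a, star e, star i, star m; star b, star f, star j, star n;
         star c, star g, star k, star o; star d, star h, star l, star p] := by
    intro a b c d e f g h i j k l m n o p
    ext x y; fin_cases x <;> fin_cases y <;> rfl
  intro P hP
  fin_cases hP <;>
  · rw [hσi]
    subst hH1 hH2 hEpp hEpm hEp0 hE0p hσ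
    rw [hL1, hL2]
    simp only [d4, Matrix.conjTranspose_smul, ct4]
    norm_num
    ext i j
    fin_cases i <;> fin_cases j <;>
      simp [Matrix.mul_apply, Fin.sum_univ_four, Matrix.vecHead, Matrix.vecTail,
        Matrix.conjTranspose_apply, lh, lnh, lh2, lnh2, l0, hstar, hconj,
        Complex.star_def, map_inv₀, Complex.conj_ofReal,
        mul_inv_cancel₀ hμ0, inv_mul_cancel₀ hμ0] <;>
      (try ring_nf) <;> (try field_simp) <;> (try ring)
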